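/- Fix integers T ≥ 1 and k ≥ 0 and gradients g_1,…,g_T ∈ E*. If S ⊆ [T] satisfies T − |S| ≤ k, then for every t ∈ [T] the threshold of the Top-k Filter satisfies m_t ≤ G(S); consequently, every passed round t ∈ P satisfies ‖g_t‖_* ≤ 2·G(S). -/

import Mathlib

/-!
Top-k Filter (Algorithm 1): rounds are indexed `0, 1, …, T-1`.  For round `t`,
`topkThresh g k t` is the `(k+1)`-th largest value among `‖g 0‖, …, ‖g t‖`
(`0` if fewer than `k+1` values are available), i.e. the minimum of the list
maintained by the algorithm.  Round `t` is passed iff `‖g t‖ ≤ 2 * topkThresh g k t`.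
Gradients live in the continuous dual `E →L[ℝ] ℝ`, whose operator norm is the dual norm.
-/

/-- The `(k+1)`-th largest element of a list of reals ( `0` if the list has fewer
than `k+1` elements). -/
noncomputable def kthLargest (k : ℕ) (l : List ℝ) : ℝ :=
  (l.mergeSort (fun a b => decide (b ≤ a))).getD k 0

/-- `m_t`: the `(k+1)`-th largest value among `‖g 0‖, …, ‖g t‖`. -/
noncomputable def topkThresh {E : Type*} [NormedAddCommGroup E] [NormedSpace ℝ E]
    (g : ℕ → E →L[ℝ] ℝ) (k t : ℕ) : ℝ :=
  kthLargest k ((List.range (t + 1)).map fun s => ‖g s‖)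

/-- The set of rounds in `{0, …, T-1}` passed on to ALG by the Top-k Filter. -/
noncomputable def topkPassed {E : Type*} [NormedAddCommGroup E] [NormedSpace ℝ E]
    (g : ℕ → E →L[ℝ] ℝ) (k T : ℕ) : Finset ℕ :=
  (Finset.range T).filter fun t => ‖g t‖ ≤ 2 * topkThresh g k t

/-- `G(S) = max_{t ∈ S} ‖g t‖` (with `G(∅) = 0`). -/
noncomputable def gradMax {E : Type*} [NormedAddCommGroup E] [NormedSpace ℝ E]
    (g : ℕ → E →L[ℝ] ℝ) (S : Finset ℕ) : ℝ :=
  ((S.sup fun t => ‖g t‖₊ : NNReal) : ℝ)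

/-- `D(u,S) = max{‖w t - u‖ : t ∈ [T], ‖g t‖ ≤ 2 G(S)}` (with value `0` if no such `t`). -/
noncomputable def distMax {E : Type*} [NormedAddCommGroup E] [NormedSpace ℝ E]
    (g : ℕ → E →L[ℝ] ℝ) (w : ℕ → E) (u : E) (T : ℕ) (S : Finset ℕ) : ℝ :=
  ((((Finset.range T).filter fun t => ‖g t‖ ≤ 2 * gradMax g S).sup
      fun t => ‖w t - u‖₊ : NNReal) : ℝ)


lemma kthLargest_le (k : ℕ) (l : List ℝ) (G : ℝ) (hG : 0 ≤ G)
    (hcount : l.countP (fun x => decide (G < x)) ≤ k) :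
    (l.mergeSort (fun a b => decide (b ≤ a))).getD k 0 ≤ G := by
  set l' := l.mergeSort (fun a b => decide (b ≤ a)) with hl'
  by_cases hk : l'.length ≤ k
  · rw [List.getD_eq_default _ _ hk]; exact hG
  push_neg at hk
  by_contra hgt
  push_neg at hgt
  rw [List.getD_eq_getElem _ _ hk] at hgt
  have hsorted : List.Pairwise (fun a b : ℝ => b ≤ a) l' := by
    have := List.pairwise_mergeSort (le := fun a b : ℝ => decide (b ≤ a))
      (fun a b c hab hbc => by simp_all; linarith)
      (fun a b => by simp [le_total b a]) l
    simpa using this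
  have hall : ∀ x ∈ l'.take (k + 1), G < x := by
    intro x hx
    obtain ⟨i, hi, hix⟩ := List.getElem_of_mem hx
    rw [List.getElem_take] at hix
    have hik : i ≤ k := by
      have := hi; simp [List.length_take] at this; omega
    rcases lt_or_eq_of_le hik with h | h
    · have := (List.pairwise_iff_getElem.mp hsorted) i k (by omega) hk h
      subst hix; linarith
    · subst h; rw [hix] at hgt; linarith
  have hlen : (l'.take (k + 1)).length = k + 1 := by
    simp [List.length_take]; omega
  have hcnt : (l'.take (k + 1)).countP (fun x => decide (G < x)) = k + 1 := by
    rw [List.countP_eq_length.mpr (fun a ha => by simpa using hall a ha), hlen]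
  have h1 : k + 1 ≤ l'.countP (fun x => decide (G < x)) := by
    rw [← hcnt]; exact (List.take_sublist _ _).countP_le
  have h2 : l'.countP (fun x => decide (G < x)) = l.countP (fun x => decide (G < x)) :=
    (List.mergeSort_perm l _).countP_eq _
  omega


/-- if `T - |S| ≤ k`, then every threshold `m_t` of the Top-k Filter is at
most `G(S)`, and consequently every passed round has gradient norm at most `2 G(S)`. -/
theorem topk_filter_thresh_le_and_passed_bound
    {E : Type*} [NormedAddCommGroup E] [NormedSpace ℝ E] [FiniteDimensional ℝ E]
    (T k : ℕ) (hT : 1 ≤ T)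
    (g : ℕ → E →L[ℝ] ℝ)
    (S : Finset ℕ) (hS : S ⊆ Finset.range T) (hSk : T - S.card ≤ k) :
    (∀ t ∈ Finset.range T, topkThresh g k t ≤ gradMax g S) ∧
      (∀ t ∈ topkPassed g k T, ‖g t‖ ≤ 2 * gradMax g S) := by
  set G := gradMax g S with hG
  have hG0 : 0 ≤ G := (S.sup fun t => ‖g t‖₊).coe_nonneg
  have hGmem : ∀ s ∈ S, ‖g s‖ ≤ G := by
    intro s hs
    have : ‖g s‖₊ ≤ S.sup fun t => ‖g t‖₊ := Finset.le_sup (f := fun t => ‖g t‖₊) hs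
    exact_mod_cast this
  have main : ∀ t ∈ Finset.range T, topkThresh g k t ≤ G := by
    intro t ht
    rw [Finset.mem_range] at ht
    apply kthLargest_le
    · exact hG0
    · rw [List.countP_map]
      classical
      have heq : (List.range (t + 1)).countP
          ((fun x => decide (G < x)) ∘ fun s => ‖g s‖) =
          ((Finset.range (t + 1)).filter fun s => G < ‖g s‖).card := by
        simp [Finset.range, Finset.filter, Finset.card, Multiset.range,
          Multiset.countP_eq_card_filter, List.countP_eq_length_filter]
        congr 1
      rw [heq]
      calc ((Finset.range (t + 1)).filter fun s => G < ‖g s‖).card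
          ≤ (Finset.range T \ S).card := by
            apply Finset.card_le_card
            intro s hs
            rw [Finset.mem_filter, Finset.mem_range] at hs
            rw [Finset.mem_sdiff, Finset.mem_range]
            refine ⟨by omega, fun hsS => absurd (hGmem s hsS) (not_le.mpr hs.2)⟩
        _ = T - S.card := by rw [Finset.card_sdiff_of_subset hS, Finset.card_range]
        _ ≤ k := hSk
  refine ⟨main, ?_⟩
  intro t ht
  rw [topkPassed, Finset.mem_filter] at ht
  have := main t ht.1
  linarith [ht.2]
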